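/- Suppose positive reals a_1, ..., a_K and rates R_1, ..., R_K > 0 satisfy a_{n-1} ≥ a_n · 2^{R_n}(2^{R_{n-1}} - 1)/(2^{R_n} - 1) for all n = 2, ..., K. Then for every n = 1, ..., K-1, a_n - (2^{R_n} - 1) ∑_{l=n+1}^K a_l ≥ a_n · ∏_{m=n+1}^K 2^{-R_m} > 0. -/

import Mathlib

theorem stmt_5 (K : ℕ) (R a : ℕ → ℝ)
    (hR : ∀ n ∈ Finset.Icc 1 K, 0 < R n)
    (ha : ∀ n ∈ Finset.Icc 1 K, 0 < a n)
    (hwb : ∀ n ∈ Finset.Icc 2 K,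
      a (n - 1) ≥ a n * (2 : ℝ) ^ (R n) * ((2 : ℝ) ^ (R (n - 1)) - 1) / ((2 : ℝ) ^ (R n) - 1)) :
    ∀ n : ℕ, 1 ≤ n → n ≤ K - 1 →
      a n - ((2 : ℝ) ^ (R n) - 1) * (∑ l ∈ Finset.Icc (n + 1) K, a l) ≥
          a n * ∏ m ∈ Finset.Icc (n + 1) K, (2 : ℝ) ^ (-R m) ∧
        0 < a n * ∏ m ∈ Finset.Icc (n + 1) K, (2 : ℝ) ^ (-R m) := by
  have key : ∀ d n : ℕ, 1 ≤ n → n + d = K →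
      a n - ((2 : ℝ) ^ (R n) - 1) * (∑ l ∈ Finset.Icc (n + 1) K, a l) ≥
        a n * ∏ m ∈ Finset.Icc (n + 1) K, (2 : ℝ) ^ (-R m) := by
    intro d
    induction d with
    | zero =>
      intro n h1 h2
      have hKn : K = n := by omega
      subst hKn
      rw [Finset.Icc_eq_empty (by omega)]
      simp
    | succ d ih =>
      intro n h1 h2
      have hK1 : n + 1 ≤ K := by omega
      have IH := ih (n + 1) (by omega) (by omega)
      have hsplit : Finset.Icc (n + 1) K = insert (n + 1) (Finset.Icc (n + 2) K) := by
        ext x; simp [Finset.mem_Icc]; omega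
      have hnot : (n + 1) ∉ Finset.Icc (n + 2) K := by simp
      rw [hsplit, Finset.sum_insert hnot, Finset.prod_insert hnot]
      set S := ∑ l ∈ Finset.Icc (n + 2) K, a l with hS
      set P := ∏ m ∈ Finset.Icc (n + 2) K, (2 : ℝ) ^ (-R m) with hPdef
      set s := (2 : ℝ) ^ (R n) with hs
      set t := (2 : ℝ) ^ (R (n + 1)) with ht
      have hRn : 0 < R n := hR n (by simp [Finset.mem_Icc]; omega)
      have hRn1 : 0 < R (n + 1) := hR (n + 1) (by simp [Finset.mem_Icc]; omega)
      have han : 0 < a n := ha n (by simp [Finset.mem_Icc]; omega)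
      have han1 : 0 < a (n + 1) := ha (n + 1) (by simp [Finset.mem_Icc]; omega)
      have hs1 : 1 < s := by
        rw [hs, Real.one_lt_rpow_iff_of_pos (by norm_num)]
        exact Or.inl ⟨one_lt_two, hRn⟩
      have ht1 : 1 < t := by
        rw [ht, Real.one_lt_rpow_iff_of_pos (by norm_num)]
        exact Or.inl ⟨one_lt_two, hRn1⟩
      have hP0 : 0 < P :=
        Finset.prod_pos fun m _ => Real.rpow_pos_of_pos (by norm_num) _
      have hP1 : P ≤ 1 :=
        Finset.prod_le_one
          (fun m _ => (Real.rpow_pos_of_pos (by norm_num) _).le)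
          (fun m hm => by
            have hRm : 0 < R m := by
              refine hR m ?_
              simp only [Finset.mem_Icc] at hm ⊢
              omega
            exact Real.rpow_le_one_of_one_le_of_nonpos one_le_two (by linarith))
      have hw := hwb (n + 1) (by simp [Finset.mem_Icc]; omega)
      simp only [Nat.add_sub_cancel] at hw
      rw [← hs, ← ht] at hw
      have hw' : a (n + 1) * t * (s - 1) ≤ a n * (t - 1) := by
        rw [ge_iff_le, div_le_iff₀ (by linarith)] at hw
        linarith
      have hIH' : (t - 1) * S ≤ a (n + 1) - a (n + 1) * P := by linarith [IH]
      have hneg : (2 : ℝ) ^ (-R (n + 1)) = t⁻¹ := by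
        rw [ht, ← Real.rpow_neg (by norm_num)]
      rw [hneg]
      have htpos : (0 : ℝ) < t := by linarith
      rw [ge_iff_le, show a n * (t⁻¹ * P) = a n * P / t by ring, div_le_iff₀ htpos]
      have h3 : t * (s - 1) * ((t - 1) * S) ≤ t * (s - 1) * (a (n + 1) - a (n + 1) * P) :=
        mul_le_mul_of_nonneg_left hIH' (by nlinarith)
      have h4 : t * (s - 1) * a (n + 1) * (t - P) ≤ a n * (t - 1) * (t - P) :=
        mul_le_mul_of_nonneg_right (by nlinarith) (by linarith)
      have goal2 : a n * P * (t - 1) ≤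
          (a n - (s - 1) * (a (n + 1) + S)) * t * (t - 1) := by nlinarith [h3, h4]
      exact le_of_mul_le_mul_right goal2 (by linarith)
  intro n h1 h2
  refine ⟨key (K - n) n h1 (by omega), ?_⟩
  have han : 0 < a n := ha n (by simp [Finset.mem_Icc]; omega)
  have hP0 : 0 < ∏ m ∈ Finset.Icc (n + 1) K, (2 : ℝ) ^ (-R m) :=
    Finset.prod_pos fun m _ => Real.rpow_pos_of_pos (by norm_num) _
  positivity
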